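/- Let q : ℕ×ℕ → ℝ be a symmetric solution of the Dirichlet problem with 0 ≤ q(i,j) ≤ 1 for all i,j. Then the double power series P(x,y) = Σ_{i,j ≥ 1} q(i,j)·x^i·y^j converges absolutely for (x,y) ∈ (0,1)², and for all (x,y) ∈ (0,1)² it satisfies the partial differential equation Q(x,y)·∂P/∂x(x,y) + Q(y,x)·∂P/∂y(x,y) + R(x,y)·P(x,y) = −(r/2)·(Σ_{i≥1} i·q(i,1)·x^i + Σ_{j≥1} j·q(1,j)·y^j) + d·x·y·(1/(1−x) + 1/(1−y)), where Q(x,y) = (r+d)x − r/2 − (r/2)(x/y) − d·x² and R(x,y) = r/(2x) + r/(2y) − d·x − d·y. -/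

import Mathlib

/-- The coefficient `Q(x,y) = (r+d)x − r/2 − (r/2)(x/y) − d·x²`. -/
noncomputable def Qfun (r d x y : ℝ) : ℝ :=
  (r + d) * x - r / 2 - r / 2 * (x / y) - d * x ^ 2

/-- The coefficient `R(x,y) = r/(2x) + r/(2y) − d·x − d·y`. -/
noncomputable def Rfun (r d x y : ℝ) : ℝ :=
  r / (2 * x) + r / (2 * y) - d * x - d * y

/-- The generating function `P(x,y) = Σ_{i,j ≥ 1} q(i,j)·x^i·y^j`. -/
noncomputable def genFun (q : ℕ × ℕ → ℝ) (x y : ℝ) : ℝ :=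
  ∑' p : ℕ × ℕ, q (p.1 + 1, p.2 + 1) * x ^ (p.1 + 1) * y ^ (p.2 + 1)


open Set


lemma aux_bound_summable {x y : ℝ} (hx0 : 0 < x) (hx1 : x < 1) (hy0 : 0 < y) (hy1 : y < 1) :
    Summable (fun p : ℕ × ℕ => ((p.1 : ℝ) + p.2 + 2) * x ^ p.1 * y ^ p.2) := by
  have hx : |x| < 1 := by rw [abs_of_pos hx0]; exact hx1
  have hy : |y| < 1 := by rw [abs_of_pos hy0]; exact hy1
  have h1 : Summable (fun n : ℕ => ((n : ℝ) + 1) * x ^ n) := by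
    have := (summable_pow_mul_geometric_of_norm_lt_one 1 (by simpa using hx)
      (R := ℝ)).add (summable_geometric_of_lt_one hx0.le hx1)
    apply this.congr; intro n; simp; ring
  have h2 : Summable (fun n : ℕ => ((n : ℝ) + 1) * y ^ n) := by
    have := (summable_pow_mul_geometric_of_norm_lt_one 1 (by simpa using hy)
      (R := ℝ)).add (summable_geometric_of_lt_one hy0.le hy1)
    apply this.congr; intro n; simp; ring
  have hgx : Summable (fun n : ℕ => x ^ n) := summable_geometric_of_lt_one hx0.le hx1
  have hgy : Summable (fun n : ℕ => y ^ n) := summable_geometric_of_lt_one hy0.le hy1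
  have A : Summable (fun p : ℕ × ℕ => (((p.1 : ℝ) + 1) * x ^ p.1) * y ^ p.2) :=
    h1.mul_of_nonneg hgy (fun n => by positivity) (fun n => by positivity)
  have B : Summable (fun p : ℕ × ℕ => x ^ p.1 * (((p.2 : ℝ) + 1) * y ^ p.2)) :=
    hgx.mul_of_nonneg h2 (fun n => by positivity) (fun n => by positivity)
  apply (A.add B).congr
  intro p
  ring

lemma aux_summable {x y : ℝ} (hx0 : 0 < x) (hx1 : x < 1) (hy0 : 0 < y) (hy1 : y < 1)
    {F : ℕ × ℕ → ℝ} {C : ℝ}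
    (hF : ∀ p : ℕ × ℕ, |F p| ≤ C * (((p.1 : ℝ) + p.2 + 2) * x ^ p.1 * y ^ p.2)) :
    Summable F := by
  rw [← summable_abs_iff]
  apply Summable.of_nonneg_of_le (fun p => abs_nonneg _) hF
  exact (aux_bound_summable hx0 hx1 hy0 hy1).mul_left C

lemma tsum_shift_fst {F : ℕ × ℕ → ℝ} (hF : Summable F) :
    ∑' p : ℕ × ℕ, F p = (∑' j : ℕ, F (0, j)) + ∑' p : ℕ × ℕ, F (p.1 + 1, p.2) := by
  have hrow : ∀ i : ℕ, Summable fun j => F (i, j) := fun i => hF.prod_factor i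
  have houter : HasSum (fun i : ℕ => ∑' j, F (i, j)) (∑' p : ℕ × ℕ, F p) :=
    hF.hasSum.prod_fiberwise (fun i => (hrow i).hasSum)
  have hshift : Summable (fun p : ℕ × ℕ => F (p.1 + 1, p.2)) :=
    hF.comp_injective (fun p q h => by
      simp only [Prod.mk.injEq] at h
      exact Prod.ext (by omega) h.2)
  have houter' : HasSum (fun i : ℕ => ∑' j, F (i + 1, j)) (∑' p : ℕ × ℕ, F (p.1 + 1, p.2)) :=
    hshift.hasSum.prod_fiberwise (fun i => (hshift.prod_factor i).hasSum)
  rw [← houter.tsum_eq, Summable.tsum_eq_zero_add houter.summable, ← houter'.tsum_eq]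

lemma tsum_shift_snd {F : ℕ × ℕ → ℝ} (hF : Summable F) :
    ∑' p : ℕ × ℕ, F p = (∑' i : ℕ, F (i, 0)) + ∑' p : ℕ × ℕ, F (p.1, p.2 + 1) := by
  have hswap : Summable (fun p : ℕ × ℕ => F (p.2, p.1)) := hF.prod_symm
  have h1 : ∑' p : ℕ × ℕ, F p = ∑' p : ℕ × ℕ, F (p.2, p.1) :=
    ((Equiv.prodComm ℕ ℕ).tsum_eq _).symm
  have h2 : ∑' p : ℕ × ℕ, F (p.1, p.2 + 1) = ∑' p : ℕ × ℕ, F (p.2, p.1 + 1) :=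
    ((Equiv.prodComm ℕ ℕ).tsum_eq _).symm
  rw [h1, h2, tsum_shift_fst hswap]

lemma aux_summable2 {x y : ℝ} (hx0 : 0 < x) (hx1 : x < 1) (hy0 : 0 < y) (hy1 : y < 1)
    {c w : ℕ × ℕ → ℝ} {k : ℝ} (hw : ∀ p, |w p| ≤ 1)
    (hc : ∀ p : ℕ × ℕ, |c p| ≤ k * ((p.1 : ℝ) + p.2 + 2))
    {E1 E2 : ℕ × ℕ → ℕ} (hE1 : ∀ p, p.1 ≤ E1 p) (hE2 : ∀ p, p.2 ≤ E2 p) :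
    Summable (fun p : ℕ × ℕ => c p * w p * x ^ E1 p * y ^ E2 p) := by
  have hk : 0 ≤ k := by
    have h := (abs_nonneg (c (0, 0))).trans (hc (0, 0))
    norm_num at h
    linarith
  apply aux_summable hx0 hx1 hy0 hy1 (C := k)
  intro p
  have h3 : x ^ E1 p ≤ x ^ p.1 := pow_le_pow_of_le_one hx0.le hx1.le (hE1 p)
  have h4 : y ^ E2 p ≤ y ^ p.2 := pow_le_pow_of_le_one hy0.le hy1.le (hE2 p)
  calc |c p * w p * x ^ E1 p * y ^ E2 p|
      = |c p| * |w p| * x ^ E1 p * y ^ E2 p := by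
        rw [abs_mul, abs_mul, abs_mul, abs_of_pos (pow_pos hx0 _), abs_of_pos (pow_pos hy0 _)]
    _ ≤ (k * ((p.1 : ℝ) + p.2 + 2)) * 1 * x ^ p.1 * y ^ p.2 := by
        gcongr ?_ * ?_ * ?_ * ?_ <;>
          first
            | exact hc p
            | exact hw p
            | exact h3
            | exact h4
    _ = k * (((p.1 : ℝ) + p.2 + 2) * x ^ p.1 * y ^ p.2) := by ring

lemma tsum_comb {F G : ℕ × ℕ → ℝ} (hF : Summable F) (hG : Summable G) (c1 c2 : ℝ) :
    ∑' p : ℕ × ℕ, (c1 * F p + c2 * G p) = c1 * ∑' p, F p + c2 * ∑' p, G p := by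
  rw [Summable.tsum_add (hF.mul_left c1) (hG.mul_left c2), tsum_mul_left, tsum_mul_left]

lemma tsum_comb3 {F G H : ℕ × ℕ → ℝ} (hF : Summable F) (hG : Summable G) (hH : Summable H)
    (c1 c2 c3 : ℝ) :
    ∑' p : ℕ × ℕ, (c1 * F p + c2 * G p + c3 * H p)
      = c1 * ∑' p, F p + c2 * ∑' p, G p + c3 * ∑' p, H p := by
  rw [Summable.tsum_add ((hF.mul_left c1).add (hG.mul_left c2)) (hH.mul_left c3),
    Summable.tsum_add (hF.mul_left c1) (hG.mul_left c2), tsum_mul_left, tsum_mul_left, tsum_mul_left]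

lemma hasDerivAt_genFun (q : ℕ × ℕ → ℝ) (hq : ∀ p, |q p| ≤ 1) {x y : ℝ}
    (hx0 : 0 < x) (hx1 : x < 1) (hy0 : 0 < y) (hy1 : y < 1) :
    HasDerivAt (fun t => genFun q t y)
      (∑' p : ℕ × ℕ, q (p.1 + 1, p.2 + 1) * (((p.1 : ℝ) + 1) * x ^ p.1) * y ^ (p.2 + 1)) x := by
  set b : ℝ := (x + 1) / 2 with hb
  have hb0 : 0 < b := by positivity
  have hxb : x < b := by simp [hb]; linarith
  have hb1 : b < 1 := by simp [hb]; linarith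
  have hu : Summable (fun p : ℕ × ℕ => ((p.1 : ℝ) + 1) * b ^ p.1 * y ^ (p.2 + 1)) := by
    apply aux_summable hb0 hb1 hy0 hy1 (C := 1)
    intro p
    rw [abs_of_nonneg (by positivity)]
    rw [pow_succ]
    have h1 : ((p.1 : ℝ) + 1) * y ≤ (p.1 : ℝ) + p.2 + 2 := by
      nlinarith [Nat.cast_nonneg (α := ℝ) p.1, Nat.cast_nonneg (α := ℝ) p.2]
    have h2 : (0:ℝ) < b ^ p.1 := by positivity
    have h3 : (0:ℝ) < y ^ p.2 := by positivity
    nlinarith [mul_le_mul_of_nonneg_right h1 (mul_pos h2 h3).le]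
  have key := hasDerivAt_tsum_of_isPreconnected hu (isOpen_Ioo (a := -b) (b := b))
    (isPreconnected_Ioo)
    (g := fun p t => q (p.1 + 1, p.2 + 1) * t ^ (p.1 + 1) * y ^ (p.2 + 1))
    (g' := fun p t => q (p.1 + 1, p.2 + 1) * (((p.1 : ℝ) + 1) * t ^ p.1) * y ^ (p.2 + 1))
    (fun p t ht => by
      have := ((hasDerivAt_pow (p.1 + 1) t).const_mul (q (p.1 + 1, p.2 + 1))).mul_const
        (y ^ (p.2 + 1))
      refine this.congr_deriv ?_
      push_cast
      ring)
    (fun p t ht => by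
      have htb : |t| ≤ b := by
        rw [abs_le]; exact ⟨ht.1.le, ht.2.le⟩
      have e1 : |q (p.1 + 1, p.2 + 1)| ≤ 1 := hq _
      have e2 : |((p.1 : ℝ) + 1) * t ^ p.1| ≤ ((p.1 : ℝ) + 1) * b ^ p.1 := by
        rw [abs_mul, abs_of_nonneg (by positivity : (0:ℝ) ≤ (p.1:ℝ) + 1), abs_pow]
        gcongr
      have e3 : |y ^ (p.2 + 1)| = y ^ (p.2 + 1) := abs_of_pos (by positivity)
      have : ‖q (p.1 + 1, p.2 + 1) * (((p.1 : ℝ) + 1) * t ^ p.1) * y ^ (p.2 + 1)‖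
          ≤ 1 * (((p.1 : ℝ) + 1) * b ^ p.1) * y ^ (p.2 + 1) := by
        rw [Real.norm_eq_abs, abs_mul, abs_mul, e3]
        gcongr
      simpa using this)
    (y₀ := x) (mem_Ioo.2 ⟨by linarith, hxb⟩)
    (by
      apply aux_summable hx0 hx1 hy0 hy1 (C := x * y)
      intro p
      rw [abs_mul, abs_mul, abs_pow, abs_pow, abs_of_pos hx0, abs_of_pos hy0,
        pow_succ, pow_succ]
      have e1 : |q (p.1 + 1, p.2 + 1)| ≤ 1 := hq _
      have h2 : (0:ℝ) < x ^ p.1 := by positivity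
      have h3 : (0:ℝ) < y ^ p.2 := by positivity
      have h5 : (1:ℝ) ≤ (p.1:ℝ) + p.2 + 2 := by
        have := Nat.cast_nonneg (α := ℝ) p.1
        have := Nat.cast_nonneg (α := ℝ) p.2
        linarith
      nlinarith [mul_le_mul_of_nonneg_right h5
        (by positivity : (0:ℝ) ≤ x ^ p.1 * y ^ p.2 * x * y),
        mul_le_mul_of_nonneg_right e1
        (by positivity : (0:ℝ) ≤ x ^ p.1 * x * (y ^ p.2 * y))])
    (mem_Ioo.2 ⟨by linarith, hxb⟩)
  exact key

set_option maxHeartbeats 4000000 in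
/-- for a symmetric `[0,1]`-valued solution `q` of the Dirichlet problem,
the double power series `P(x,y) = Σ_{i,j ≥ 1} q(i,j)x^i y^j` converges absolutely on
`(0,1)²` and satisfies there the PDE
`Q(x,y)∂P/∂x + Q(y,x)∂P/∂y + R(x,y)P = −(r/2)(Σ i·q(i,1)x^i + Σ j·q(1,j)y^j)
  + d·x·y·(1/(1−x) + 1/(1−y))`. -/
theorem genFun_pde (r d : ℝ) (hr : 0 < r) (hd : 0 < d) (q : ℕ × ℕ → ℝ)
    (hq_bdry1 : ∀ i : ℕ, q (i, 0) = 1) (hq_bdry2 : ∀ j : ℕ, q (0, j) = 1)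
    (hq_rec : ∀ i j : ℕ, 1 ≤ i → 1 ≤ j →
      q (i, j)
        = d * i / ((r + d) * ((i : ℝ) + (j : ℝ))) * q (i - 1, j)
          + d * j / ((r + d) * ((i : ℝ) + (j : ℝ))) * q (i, j - 1)
          + r / (2 * (r + d)) * q (i, j + 1)
          + r / (2 * (r + d)) * q (i + 1, j))
    (hq_sym : ∀ i j : ℕ, q (i, j) = q (j, i))
    (hq_nonneg : ∀ i j : ℕ, 0 ≤ q (i, j)) (hq_le_one : ∀ i j : ℕ, q (i, j) ≤ 1) :
    ∀ x y : ℝ, x ∈ Set.Ioo (0 : ℝ) 1 → y ∈ Set.Ioo (0 : ℝ) 1 →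
      Summable (fun p : ℕ × ℕ => |q (p.1 + 1, p.2 + 1) * x ^ (p.1 + 1) * y ^ (p.2 + 1)|) ∧
      ∃ Px Py : ℝ,
        HasDerivAt (fun t => genFun q t y) Px x ∧
        HasDerivAt (fun t => genFun q x t) Py y ∧
        Qfun r d x y * Px + Qfun r d y x * Py + Rfun r d x y * genFun q x y
          = -(r / 2) * ((∑' i : ℕ, (i : ℝ) * q (i, 1) * x ^ i)
              + (∑' j : ℕ, (j : ℝ) * q (1, j) * y ^ j))
            + d * x * y * (1 / (1 - x) + 1 / (1 - y)) := by
  intro x y hx hy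
  obtain ⟨hx0, hx1⟩ := hx
  obtain ⟨hy0, hy1⟩ := hy
  have hq1 : ∀ p : ℕ × ℕ, |q p| ≤ 1 := by
    intro p
    rw [abs_le]
    constructor
    · have := hq_nonneg p.1 p.2; simp at this ⊢; linarith
    · have := hq_le_one p.1 p.2; simpa using this
  have hq1' : ∀ p : ℕ × ℕ, |q (p.1 + 1, p.2 + 1)| ≤ 1 := fun p => hq1 _
  have castpos : ∀ n : ℕ, (0:ℝ) ≤ (n:ℝ) := fun n => Nat.cast_nonneg n
  have hkey : ∀ p : ℕ × ℕ, ((r + d) * (((p.1:ℝ)+1) + ((p.2:ℝ)+1))) * q (p.1+1, p.2+1)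
      = d * ((p.1:ℝ)+1) * q (p.1, p.2+1) + d * ((p.2:ℝ)+1) * q (p.1+1, p.2)
        + (r/2 * (((p.1:ℝ)+1) + ((p.2:ℝ)+1))) * q (p.1+1, p.2+1+1)
        + (r/2 * (((p.1:ℝ)+1) + ((p.2:ℝ)+1))) * q (p.1+1+1, p.2+1) := by
    intro p
    have h := hq_rec (p.1+1) (p.2+1) (by omega) (by omega)
    simp only [Nat.add_sub_cancel] at h
    push_cast at h
    have hne1 : (r + d) ≠ 0 := by linarith
    have hne2 : ((p.1:ℝ) + 1 + ((p.2:ℝ) + 1)) ≠ 0 := by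
      have := castpos p.1; have := castpos p.2; intro hc; nlinarith
    rw [h]
    field_simp
  -- families
  set fP : ℕ × ℕ → ℝ := fun p => q (p.1 + 1, p.2 + 1) * x ^ (p.1 + 1) * y ^ (p.2 + 1) with hfP
  set fPx : ℕ × ℕ → ℝ :=
    fun p => q (p.1 + 1, p.2 + 1) * (((p.1 : ℝ) + 1) * x ^ p.1) * y ^ (p.2 + 1) with hfPx
  set fPy : ℕ × ℕ → ℝ :=
    fun p => q (p.1 + 1, p.2 + 1) * x ^ (p.1 + 1) * (((p.2 : ℝ) + 1) * y ^ p.2) with hfPy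
  -- summabilities
  have SfP : Summable fP := by
    apply (aux_summable2 hx0 hx1 hy0 hy1 (c := fun _ => (1:ℝ)) (k := 1) hq1'
      (fun p => by
        rw [abs_one, one_mul]
        have := Nat.cast_nonneg (α := ℝ) p.1; have := Nat.cast_nonneg (α := ℝ) p.2; linarith)
      (E1 := fun p => p.1 + 1) (E2 := fun p => p.2 + 1)
      (fun p => Nat.le_succ _) (fun p => Nat.le_succ _)).congr
    intro p; show _ = fP p; rw [hfP]; dsimp only; ring
  have SfPx : Summable fPx := by
    apply (aux_summable2 hx0 hx1 hy0 hy1 (c := fun p => (p.1 : ℝ) + 1) (k := 1) hq1'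
      (fun p => by rw [abs_of_nonneg (by positivity)]; push_cast; linarith [Nat.cast_nonneg (α := ℝ) p.2])
      (E1 := fun p => p.1) (E2 := fun p => p.2 + 1)
      (fun p => le_refl _) (fun p => Nat.le_succ _)).congr
    intro p; show _ = fPx p; rw [hfPx]; dsimp only; ring
  have SfPy : Summable fPy := by
    apply (aux_summable2 hx0 hx1 hy0 hy1 (c := fun p => (p.2 : ℝ) + 1) (k := 1) hq1'
      (fun p => by rw [abs_of_nonneg (by positivity)]; push_cast; linarith [Nat.cast_nonneg (α := ℝ) p.1])
      (E1 := fun p => p.1 + 1) (E2 := fun p => p.2)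
      (fun p => Nat.le_succ _) (fun p => le_refl _)).congr
    intro p; show _ = fPy p; rw [hfPy]; dsimp only; ring
  constructor
  · exact SfP.abs
  -- derivatives
  have hDx := hasDerivAt_genFun q hq1 hx0 hx1 hy0 hy1
  set Px : ℝ := ∑' p : ℕ × ℕ, fPx p with hPxdef
  set qsw : ℕ × ℕ → ℝ := fun p => q (p.2, p.1) with hqsw
  have hqsw1 : ∀ p : ℕ × ℕ, |qsw p| ≤ 1 := fun p => hq1 _
  have hDy' := hasDerivAt_genFun qsw hqsw1 hy0 hy1 hx0 hx1
  have hswapfun : ∀ t : ℝ, genFun qsw t x = genFun q x t := by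
    intro t
    show (∑' p : ℕ × ℕ, qsw (p.1 + 1, p.2 + 1) * t ^ (p.1 + 1) * x ^ (p.2 + 1)) = _
    calc (∑' p : ℕ × ℕ, qsw (p.1 + 1, p.2 + 1) * t ^ (p.1 + 1) * x ^ (p.2 + 1))
        = ∑' p : ℕ × ℕ,
            (fun p' : ℕ × ℕ => q (p'.1 + 1, p'.2 + 1) * x ^ (p'.1 + 1) * t ^ (p'.2 + 1))
              ((Equiv.prodComm ℕ ℕ) p) := by
          apply tsum_congr; intro p; simp [hqsw, Equiv.prodComm]; ring
      _ = ∑' p : ℕ × ℕ, q (p.1 + 1, p.2 + 1) * x ^ (p.1 + 1) * t ^ (p.2 + 1) :=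
          (Equiv.prodComm ℕ ℕ).tsum_eq
            (fun p' : ℕ × ℕ => q (p'.1 + 1, p'.2 + 1) * x ^ (p'.1 + 1) * t ^ (p'.2 + 1))
      _ = genFun q x t := rfl
  set Py : ℝ := ∑' p : ℕ × ℕ,
    qsw (p.1 + 1, p.2 + 1) * (((p.1 : ℝ) + 1) * y ^ p.1) * x ^ (p.2 + 1) with hPydef
  have hDy : HasDerivAt (fun t => genFun q x t) Py y := by
    have : (fun t => genFun qsw t x) = (fun t => genFun q x t) := funext hswapfun
    rw [← this]
    exact hDy'
  have hPy_eq : Py = ∑' p : ℕ × ℕ, fPy p := by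
    rw [hPydef]
    calc (∑' p : ℕ × ℕ, qsw (p.1 + 1, p.2 + 1) * (((p.1 : ℝ) + 1) * y ^ p.1) * x ^ (p.2 + 1))
        = ∑' p : ℕ × ℕ, (fun p' : ℕ × ℕ => fPy p') ((Equiv.prodComm ℕ ℕ) p) := by
          apply tsum_congr; intro p; simp [hqsw, hfPy, Equiv.prodComm]; ring
      _ = _ := (Equiv.prodComm ℕ ℕ).tsum_eq (fun p' : ℕ × ℕ => fPy p')
  refine ⟨Px, Py, hDx, hDy, ?_⟩
  have hrd : (0:ℝ) < r + d := by linarith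
  have hP : genFun q x y = ∑' p : ℕ × ℕ, fP p := rfl
  -- families
  set fa : ℕ × ℕ → ℝ := fun p =>
    ((r + d) * (((p.1:ℝ)+1) + ((p.2:ℝ)+1))) * q (p.1+1, p.2+1) * x ^ (p.1+1) * y ^ (p.2+1)
    with hfa
  set fb1 : ℕ × ℕ → ℝ := fun p =>
    (d * ((p.1:ℝ)+1)) * q (p.1, p.2+1) * x ^ (p.1+1) * y ^ (p.2+1) with hfb1
  set fb2 : ℕ × ℕ → ℝ := fun p =>
    (d * ((p.2:ℝ)+1)) * q (p.1+1, p.2) * x ^ (p.1+1) * y ^ (p.2+1) with hfb2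
  set fb3 : ℕ × ℕ → ℝ := fun p =>
    (r/2 * (((p.1:ℝ)+1) + ((p.2:ℝ)+1))) * q (p.1+1, p.2+1+1) * x ^ (p.1+1) * y ^ (p.2+1)
    with hfb3
  set fb4 : ℕ × ℕ → ℝ := fun p =>
    (r/2 * (((p.1:ℝ)+1) + ((p.2:ℝ)+1))) * q (p.1+1+1, p.2+1) * x ^ (p.1+1) * y ^ (p.2+1)
    with hfb4
  set fG : ℕ × ℕ → ℝ := fun p =>
    (((p.1:ℝ) + (p.2:ℝ)) + 1) * q (p.1+1, p.2+1) * x ^ (p.1+1) * y ^ p.2 with hfG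
  set fH : ℕ × ℕ → ℝ := fun p =>
    (((p.1:ℝ) + (p.2:ℝ)) + 1) * q (p.1+1, p.2+1) * x ^ p.1 * y ^ (p.2+1) with hfH
  -- summabilities
  have Sa : Summable fa := by
    have := aux_summable2 hx0 hx1 hy0 hy1 (c := fun p : ℕ × ℕ => (r + d) * (((p.1:ℝ)+1) + ((p.2:ℝ)+1))) (w := fun p : ℕ × ℕ => q (p.1+1, p.2+1)) (k := r + d)
      (E1 := fun p : ℕ × ℕ => p.1 + 1) (E2 := fun p : ℕ × ℕ => p.2 + 1) (fun p => hq1 _)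
      (fun p => by
        rw [abs_of_nonneg (by nlinarith [castpos p.1, castpos p.2])]
        have := castpos p.1; have := castpos p.2
        exact le_of_eq (by ring))
      (fun p => Nat.le_succ _) (fun p => Nat.le_succ _)
    apply this.congr
    intro p
    rw [hfa]
  have Sb1 : Summable fb1 := by
    have := aux_summable2 hx0 hx1 hy0 hy1 (c := fun p : ℕ × ℕ => d * ((p.1:ℝ)+1)) (w := fun p : ℕ × ℕ => q (p.1, p.2+1)) (k := d)
      (E1 := fun p : ℕ × ℕ => p.1 + 1) (E2 := fun p : ℕ × ℕ => p.2 + 1) (fun p => hq1 _)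
      (fun p => by
        rw [abs_of_nonneg (by nlinarith [castpos p.1])]
        have := castpos p.1; have := castpos p.2
        nlinarith)
      (fun p => Nat.le_succ _) (fun p => Nat.le_succ _)
    apply this.congr
    intro p
    rw [hfb1]
  have Sb2 : Summable fb2 := by
    have := aux_summable2 hx0 hx1 hy0 hy1 (c := fun p : ℕ × ℕ => d * ((p.2:ℝ)+1)) (w := fun p : ℕ × ℕ => q (p.1+1, p.2)) (k := d)
      (E1 := fun p : ℕ × ℕ => p.1 + 1) (E2 := fun p : ℕ × ℕ => p.2 + 1) (fun p => hq1 _)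
      (fun p => by
        rw [abs_of_nonneg (by nlinarith [castpos p.2])]
        have := castpos p.1; have := castpos p.2
        nlinarith)
      (fun p => Nat.le_succ _) (fun p => Nat.le_succ _)
    apply this.congr
    intro p
    rw [hfb2]
  have Sb3 : Summable fb3 := by
    have := aux_summable2 hx0 hx1 hy0 hy1 (c := fun p : ℕ × ℕ => r/2 * (((p.1:ℝ)+1) + ((p.2:ℝ)+1))) (w := fun p : ℕ × ℕ => q (p.1+1, p.2+1+1)) (k := r/2)
      (E1 := fun p : ℕ × ℕ => p.1 + 1) (E2 := fun p : ℕ × ℕ => p.2 + 1) (fun p => hq1 _)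
      (fun p => by
        rw [abs_of_nonneg (by nlinarith [castpos p.1, castpos p.2])]
        have := castpos p.1; have := castpos p.2
        exact le_of_eq (by ring))
      (fun p => Nat.le_succ _) (fun p => Nat.le_succ _)
    apply this.congr
    intro p
    rw [hfb3]
  have Sb4 : Summable fb4 := by
    have := aux_summable2 hx0 hx1 hy0 hy1 (c := fun p : ℕ × ℕ => r/2 * (((p.1:ℝ)+1) + ((p.2:ℝ)+1))) (w := fun p : ℕ × ℕ => q (p.1+1+1, p.2+1)) (k := r/2)
      (E1 := fun p : ℕ × ℕ => p.1 + 1) (E2 := fun p : ℕ × ℕ => p.2 + 1) (fun p => hq1 _)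
      (fun p => by
        rw [abs_of_nonneg (by nlinarith [castpos p.1, castpos p.2])]
        have := castpos p.1; have := castpos p.2
        exact le_of_eq (by ring))
      (fun p => Nat.le_succ _) (fun p => Nat.le_succ _)
    apply this.congr
    intro p
    rw [hfb4]
  have SG : Summable fG := by
    have := aux_summable2 hx0 hx1 hy0 hy1 (c := fun p : ℕ × ℕ => ((p.1:ℝ) + (p.2:ℝ)) + 1) (w := fun p : ℕ × ℕ => q (p.1+1, p.2+1)) (k := 1)
      (E1 := fun p : ℕ × ℕ => p.1 + 1) (E2 := fun p : ℕ × ℕ => p.2) (fun p => hq1 _)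
      (fun p => by
        rw [abs_of_nonneg (by nlinarith [castpos p.1, castpos p.2])]
        have := castpos p.1; have := castpos p.2
        linarith)
      (fun p => Nat.le_succ _) (fun p => le_refl _)
    apply this.congr
    intro p
    rw [hfG]
  have SH : Summable fH := by
    have := aux_summable2 hx0 hx1 hy0 hy1 (c := fun p : ℕ × ℕ => ((p.1:ℝ) + (p.2:ℝ)) + 1) (w := fun p : ℕ × ℕ => q (p.1+1, p.2+1)) (k := 1)
      (E1 := fun p : ℕ × ℕ => p.1) (E2 := fun p : ℕ × ℕ => p.2 + 1) (fun p => hq1 _)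
      (fun p => by
        rw [abs_of_nonneg (by nlinarith [castpos p.1, castpos p.2])]
        have := castpos p.1; have := castpos p.2
        linarith)
      (fun p => le_refl _) (fun p => Nat.le_succ _)
    apply this.congr
    intro p
    rw [hfH]
  -- pointwise recurrence
  have hrec : ∀ p : ℕ × ℕ, fa p = fb1 p + fb2 p + fb3 p + fb4 p := by
    intro p
    rw [hfa, hfb1, hfb2, hfb3, hfb4]
    dsimp only
    linear_combination (x ^ (p.1+1) * y ^ (p.2+1)) * hkey p
  -- one-dimensional boundary sums
  set S1' : ℝ := ∑' i : ℕ, ((i:ℝ)+1) * q (i+1, 1) * x ^ (i+1) with hS1'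
  set S2' : ℝ := ∑' j : ℕ, ((j:ℝ)+1) * q (1, j+1) * y ^ (j+1) with hS2'
  -- main relations
  have hA : ∑' p : ℕ × ℕ, fa p
      = (r+d)*x*(∑' p : ℕ × ℕ, fPx p) + (r+d)*y*(∑' p : ℕ × ℕ, fPy p) := by
    calc ∑' p : ℕ × ℕ, fa p = ∑' p : ℕ × ℕ, (((r+d)*x) * fPx p + ((r+d)*y) * fPy p) := by
          apply tsum_congr; intro p; rw [hfa, hfPx, hfPy]; dsimp only; ring
      _ = ((r+d)*x) * (∑' p : ℕ × ℕ, fPx p) + ((r+d)*y) * (∑' p : ℕ × ℕ, fPy p) :=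
          tsum_comb SfPx SfPy _ _
      _ = _ := by ring
  have hB1 : ∑' p : ℕ × ℕ, fb1 p
      = d*x*(y*(1-y)⁻¹) + (d*x^2*(∑' p : ℕ × ℕ, fPx p) + d*x*(∑' p : ℕ × ℕ, fP p)) := by
    rw [tsum_shift_fst Sb1]
    congr 1
    · calc ∑' j : ℕ, fb1 (0, j) = ∑' j : ℕ, ((d*x*y) * y ^ j) := by
            apply tsum_congr; intro j; rw [hfb1]; dsimp only; rw [hq_bdry2]; push_cast; ring
        _ = (d*x*y) * (1-y)⁻¹ := by
            rw [tsum_mul_left, tsum_geometric_of_lt_one hy0.le hy1]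
        _ = d*x*(y*(1-y)⁻¹) := by ring
    · calc ∑' p : ℕ × ℕ, fb1 (p.1+1, p.2)
          = ∑' p : ℕ × ℕ, ((d*x^2) * fPx p + (d*x) * fP p) := by
            apply tsum_congr; intro p; rw [hfb1, hfPx, hfP]; dsimp only; push_cast; ring
        _ = _ := tsum_comb SfPx SfP _ _
  have hB2 : ∑' p : ℕ × ℕ, fb2 p
      = d*y*(x*(1-x)⁻¹) + (d*y^2*(∑' p : ℕ × ℕ, fPy p) + d*y*(∑' p : ℕ × ℕ, fP p)) := by
    rw [tsum_shift_snd Sb2]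
    congr 1
    · calc ∑' i : ℕ, fb2 (i, 0) = ∑' i : ℕ, ((d*y*x) * x ^ i) := by
            apply tsum_congr; intro i; rw [hfb2]; dsimp only; rw [hq_bdry1]; push_cast; ring
        _ = (d*y*x) * (1-x)⁻¹ := by
            rw [tsum_mul_left, tsum_geometric_of_lt_one hx0.le hx1]
        _ = d*y*(x*(1-x)⁻¹) := by ring
    · calc ∑' p : ℕ × ℕ, fb2 (p.1, p.2+1)
          = ∑' p : ℕ × ℕ, ((d*y^2) * fPy p + (d*y) * fP p) := by
            apply tsum_congr; intro p; rw [hfb2, hfPy, hfP]; dsimp only; push_cast; ring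
        _ = _ := tsum_comb SfPy SfP _ _
  have hB3 : ∑' p : ℕ × ℕ, fb3 p = r/2 * ((∑' p : ℕ × ℕ, fG p) - S1') := by
    have hsplit := tsum_shift_snd SG
    have h1 : ∑' i : ℕ, fG (i, 0) = S1' := by
      rw [hS1']
      apply tsum_congr; intro i; rw [hfG]; dsimp only; norm_num
    have h2 : ∑' p : ℕ × ℕ, fb3 p = r/2 * (∑' p : ℕ × ℕ, fG (p.1, p.2+1)) := by
      rw [← tsum_mul_left]
      apply tsum_congr; intro p; rw [hfb3, hfG]; dsimp only; push_cast; ring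
    rw [h2, hsplit, h1]
    ring
  have hB4 : ∑' p : ℕ × ℕ, fb4 p = r/2 * ((∑' p : ℕ × ℕ, fH p) - S2') := by
    have hsplit := tsum_shift_fst SH
    have h1 : ∑' j : ℕ, fH (0, j) = S2' := by
      rw [hS2']
      apply tsum_congr; intro j; rw [hfH]; dsimp only; norm_num
    have h2 : ∑' p : ℕ × ℕ, fb4 p = r/2 * (∑' p : ℕ × ℕ, fH (p.1+1, p.2)) := by
      rw [← tsum_mul_left]
      apply tsum_congr; intro p; rw [hfb4, hfH]; dsimp only; push_cast; ring
    rw [h2, hsplit, h1]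
    ring
  have hGrel : y * (∑' p : ℕ × ℕ, fG p)
      = x * (∑' p : ℕ × ℕ, fPx p) + y * (∑' p : ℕ × ℕ, fPy p) - (∑' p : ℕ × ℕ, fP p) := by
    rw [← tsum_mul_left]
    calc ∑' p : ℕ × ℕ, y * fG p
        = ∑' p : ℕ × ℕ, (x * fPx p + y * fPy p + (-1) * fP p) := by
          apply tsum_congr; intro p; rw [hfG, hfPx, hfPy, hfP]; dsimp only; push_cast; ring
      _ = x * (∑' p : ℕ × ℕ, fPx p) + y * (∑' p : ℕ × ℕ, fPy p)
          + (-1) * (∑' p : ℕ × ℕ, fP p) := tsum_comb3 SfPx SfPy SfP _ _ _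
      _ = _ := by ring
  have hHrel : x * (∑' p : ℕ × ℕ, fH p)
      = x * (∑' p : ℕ × ℕ, fPx p) + y * (∑' p : ℕ × ℕ, fPy p) - (∑' p : ℕ × ℕ, fP p) := by
    rw [← tsum_mul_left]
    calc ∑' p : ℕ × ℕ, x * fH p
        = ∑' p : ℕ × ℕ, (x * fPx p + y * fPy p + (-1) * fP p) := by
          apply tsum_congr; intro p; rw [hfH, hfPx, hfPy, hfP]; dsimp only; push_cast; ring
      _ = x * (∑' p : ℕ × ℕ, fPx p) + y * (∑' p : ℕ × ℕ, fPy p)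
          + (-1) * (∑' p : ℕ × ℕ, fP p) := tsum_comb3 SfPx SfPy SfP _ _ _
      _ = _ := by ring
  have hC : ∑' p : ℕ × ℕ, fa p
      = (∑' p : ℕ × ℕ, fb1 p) + (∑' p : ℕ × ℕ, fb2 p) + (∑' p : ℕ × ℕ, fb3 p)
        + (∑' p : ℕ × ℕ, fb4 p) := by
    calc ∑' p : ℕ × ℕ, fa p = ∑' p : ℕ × ℕ, (fb1 p + fb2 p + fb3 p + fb4 p) :=
          tsum_congr hrec
      _ = _ := by
          rw [Summable.tsum_add ((Sb1.add Sb2).add Sb3) Sb4, Summable.tsum_add (Sb1.add Sb2) Sb3,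
            Summable.tsum_add Sb1 Sb2]
  have hE : (r+d)*x*(∑' p : ℕ × ℕ, fPx p) + (r+d)*y*(∑' p : ℕ × ℕ, fPy p)
      = d*x*(y*(1-y)⁻¹) + (d*x^2*(∑' p : ℕ × ℕ, fPx p) + d*x*(∑' p : ℕ × ℕ, fP p))
        + (d*y*(x*(1-x)⁻¹) + (d*y^2*(∑' p : ℕ × ℕ, fPy p) + d*y*(∑' p : ℕ × ℕ, fP p)))
        + r/2 * ((∑' p : ℕ × ℕ, fG p) - S1') + r/2 * ((∑' p : ℕ × ℕ, fH p) - S2') := by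
    linarith [hA, hB1, hB2, hB3, hB4, hC]
  -- 1D sums in the statement
  have hxnorm : ‖x‖ < 1 := by rw [Real.norm_eq_abs, abs_of_pos hx0]; exact hx1
  have hynorm : ‖y‖ < 1 := by rw [Real.norm_eq_abs, abs_of_pos hy0]; exact hy1
  have hS1sum : Summable (fun i : ℕ => (i:ℝ) * q (i,1) * x ^ i) := by
    have hf : Summable (fun i : ℕ => (i:ℝ) * x ^ i) := by
      simpa using summable_pow_mul_geometric_of_norm_lt_one 1 hxnorm (R := ℝ)
    apply summable_abs_iff.mp
    apply Summable.of_nonneg_of_le (fun i => abs_nonneg _) (fun i => ?_) hf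
    rw [abs_mul, abs_mul, abs_pow, abs_of_pos hx0, abs_of_nonneg (castpos i)]
    have h := hq1 (i,1)
    nlinarith [mul_le_mul_of_nonneg_right (mul_le_mul_of_nonneg_left h (castpos i))
      (pow_pos hx0 i).le]
  have hS2sum : Summable (fun j : ℕ => (j:ℝ) * q (1,j) * y ^ j) := by
    have hf : Summable (fun j : ℕ => (j:ℝ) * y ^ j) := by
      simpa using summable_pow_mul_geometric_of_norm_lt_one 1 hynorm (R := ℝ)
    apply summable_abs_iff.mp
    apply Summable.of_nonneg_of_le (fun j => abs_nonneg _) (fun j => ?_) hf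
    rw [abs_mul, abs_mul, abs_pow, abs_of_pos hy0, abs_of_nonneg (castpos j)]
    have h := hq1 (1,j)
    nlinarith [mul_le_mul_of_nonneg_right (mul_le_mul_of_nonneg_left h (castpos j))
      (pow_pos hy0 j).le]
  have hS1eq : (∑' i : ℕ, (i:ℝ) * q (i,1) * x ^ i) = S1' := by
    rw [Summable.tsum_eq_zero_add hS1sum]
    have h0 : ((0:ℕ):ℝ) * q (0,1) * x ^ 0 = 0 := by simp
    rw [h0, zero_add, hS1']
    apply tsum_congr; intro i; push_cast; ring
  have hS2eq : (∑' j : ℕ, (j:ℝ) * q (1,j) * y ^ j) = S2' := by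
    rw [Summable.tsum_eq_zero_add hS2sum]
    have h0 : ((0:ℕ):ℝ) * q (1,0) * y ^ 0 = 0 := by simp
    rw [h0, zero_add, hS2']
    apply tsum_congr; intro j; push_cast; ring
  -- final assembly
  have h1x : (1:ℝ) - x ≠ 0 := by intro hc; linarith
  have h1y : (1:ℝ) - y ≠ 0 := by intro hc; linarith
  have hgx : (1-x) * (1-x)⁻¹ = 1 := mul_inv_cancel₀ h1x
  have hgy : (1-y) * (1-y)⁻¹ = 1 := mul_inv_cancel₀ h1y
  have hyne : y ≠ 0 := ne_of_gt hy0
  have hxne : x ≠ 0 := ne_of_gt hx0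
  rw [hS1eq, hS2eq, hP, hPxdef, hPy_eq, one_div, one_div]
  have e1 : Qfun r d x y * (2*x*y) = 2*x*y*((r+d)*x - d*x^2) - r*x*y - r*x^2 := by
    simp only [Qfun]; field_simp; ring
  have e2 : Qfun r d y x * (2*x*y) = 2*x*y*((r+d)*y - d*y^2) - r*x*y - r*y^2 := by
    simp only [Qfun]; field_simp; ring
  have e3 : Rfun r d x y * (2*x*y) = r*y + r*x - 2*d*x^2*y - 2*d*x*y^2 := by
    simp only [Rfun]; field_simp
  apply mul_right_cancel₀ (show (2*x*y) ≠ 0 by positivity)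
  linear_combination (∑' p : ℕ × ℕ, fPx p) * e1 + (∑' p : ℕ × ℕ, fPy p) * e2
    + (∑' p : ℕ × ℕ, fP p) * e3 + (2*x*y) * hE + (r*x) * hGrel + (r*y) * hHrel
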